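/- Let f = g - h with g proper lsc γ₁-convex and h continuous γ₂-convex, γ₁ + γ₂ > 0, and f bounded below. Suppose {x_k}, {y_k} satisfy y_k ∈ ∂h(x_k), x_{k+1} ∈ ∂g*(y_k), and {x_k} is bounded. Then every subsequential limit x* of {x_k} is a stationary point of f, i.e., ∂g(x*) ∩ ∂h(x*) ≠ ∅. -/

import Mathlib

noncomputable section

/-- `ℝⁿ`. -/
abbrev E (n : ℕ) := EuclideanSpace ℝ (Fin n)

/-- Convex subdifferential of an extended-real-valued function. -/
def subdiffE {n : ℕ} (g : E n → EReal) (x : E n) : Set (E n) :=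
  {v | ∀ y, ((inner ℝ v (y - x) : ℝ) : EReal) + g x ≤ g y}

/-- Convex subdifferential of a real-valued function. -/
def subdiffR {n : ℕ} (h : E n → ℝ) (x : E n) : Set (E n) :=
  {w | ∀ y, (inner ℝ w (y - x) : ℝ) ≤ h y - h x}

/-- Fenchel conjugate. -/
def fconj {n : ℕ} (g : E n → EReal) (y : E n) : EReal :=
  ⨆ x, (((inner ℝ y x : ℝ) : EReal) - g x)

/-- Convexity for extended-real-valued functions. -/
def ConvexE {n : ℕ} (g : E n → EReal) : Prop :=
  ∀ x y : E n, ∀ t : ℝ, 0 ≤ t → t ≤ 1 →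
    g (t • x + (1 - t) • y) ≤ (t : EReal) * g x + ((1 - t : ℝ) : EReal) * g y

/-- `γ`-convexity for extended-real-valued functions. -/
def GammaConvexE {n : ℕ} (g : E n → EReal) (γ : ℝ) : Prop :=
  ConvexE (fun x => g x - ((γ / 2 * ‖x‖ ^ 2 : ℝ) : EReal))

lemma ereal_cases (a : EReal) (h : a ≠ ⊥) : a = ⊤ ∨ ∃ r : ℝ, a = (r : EReal) := by
  induction a using EReal.rec with
  | bot => exact absurd rfl h
  | coe r => exact Or.inr ⟨r, rfl⟩
  | top => exact Or.inl rfl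

lemma sep_lemma {n : ℕ} (g : E n → EReal) (hnb : ∀ x, g x ≠ ⊥)
    (hlsc : LowerSemicontinuous g) (hconv : ConvexE g)
    (z₀ : E n) (t₀ : ℝ) (hz₀ : g z₀ ≤ (t₀ : EReal))
    (x₀ : E n) (r : ℝ) (hr : ¬ g x₀ ≤ (r : EReal)) :
    ∃ v : E n, ∃ s u₀ : ℝ, 0 ≤ s ∧ (inner ℝ v x₀ : ℝ) + r * s < u₀ ∧
      ∀ (z : E n) (t : ℝ), g z ≤ (t : EReal) → u₀ < (inner ℝ v z : ℝ) + t * s := by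
  set epi : Set (E n × ℝ) := {p | g p.1 ≤ (p.2 : EReal)} with hepi
  have hcl : IsClosed epi := by
    rw [← isOpen_compl_iff, isOpen_iff_mem_nhds]
    intro p hp
    have hp' : (p.2 : EReal) < g p.1 := not_le.1 hp
    obtain ⟨c, hc1, hc2⟩ := EReal.exists_between_coe_real hp'
    have h1 : {z : E n | (c : EReal) < g z} ∈ nhds p.1 := hlsc p.1 c hc2
    have h2 : Set.Iio c ∈ nhds p.2 := Iio_mem_nhds (by exact_mod_cast hc1)
    have : (p.1, p.2) = p := rfl
    rw [← this, nhds_prod_eq]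
    refine Filter.mem_of_superset (Filter.prod_mem_prod h1 h2) ?_
    rintro ⟨z, t⟩ ⟨hz, ht⟩
    simp only [Set.mem_compl_iff, hepi, Set.mem_setOf_eq, not_le]
    exact lt_trans (by exact_mod_cast ht) hz
  have hcv : Convex ℝ epi := by
    rintro ⟨p1, p2⟩ hp ⟨q1, q2⟩ hq a b ha hb hab
    have hb' : b = 1 - a := by linarith
    have h1 : g p1 ≤ (p2 : EReal) := hp
    have h2 : g q1 ≤ (q2 : EReal) := hq
    rcases ereal_cases (g p1) (hnb p1) with h | ⟨c1, hc1⟩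
    · rw [h] at h1; exact absurd h1 (by simp)
    rcases ereal_cases (g q1) (hnb q1) with h | ⟨c2, hc2⟩
    · rw [h] at h2; exact absurd h2 (by simp)
    have hkey := hconv p1 q1 a ha (by linarith)
    show g (a • p1 + b • q1) ≤ ((a * p2 + b * q2 : ℝ) : EReal)
    rw [hb']
    refine le_trans hkey ?_
    rw [hc1, hc2, ← EReal.coe_mul, ← EReal.coe_mul, ← EReal.coe_add, EReal.coe_le_coe_iff]
    have e1 : c1 ≤ p2 := by rw [hc1] at h1; exact_mod_cast h1
    have e2 : c2 ≤ q2 := by rw [hc2] at h2; exact_mod_cast h2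
    nlinarith
  have hx : (x₀, r) ∉ epi := hr
  obtain ⟨f, u₀, hfx, hfs⟩ := geometric_hahn_banach_point_closed hcv hcl hx
  set v : E n := (InnerProductSpace.toDual ℝ (E n)).symm
    (f.comp (ContinuousLinearMap.inl ℝ (E n) ℝ)) with hvdef
  have hv : ∀ z : E n, (inner ℝ v z : ℝ) = f (z, 0) := by
    intro z
    rw [hvdef, InnerProductSpace.toDual_symm_apply]
    rfl
  set s : ℝ := f (0, 1) with hsdef
  have hf : ∀ (z : E n) (t : ℝ), f (z, t) = (inner ℝ v z : ℝ) + t * s := by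
    intro z t
    have : ((z, t) : E n × ℝ) = (z, 0) + t • ((0 : E n), (1 : ℝ)) := by
      simp [Prod.ext_iff]
    rw [this, map_add, map_smul, smul_eq_mul, hv]
  have hmem : ∀ (z : E n) (t : ℝ), g z ≤ (t : EReal) → u₀ < (inner ℝ v z : ℝ) + t * s := by
    intro z t hzt
    have := hfs (z, t) hzt
    rwa [hf] at this
  have hs : 0 ≤ s := by
    by_contra hs
    push_neg at hs
    set t : ℝ := max t₀ ((u₀ - (inner ℝ v z₀ : ℝ) - 1) / s) with htdef
    have hmem0 : g z₀ ≤ (t : EReal) :=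
      le_trans hz₀ (by exact_mod_cast le_max_left _ _)
    have h1 := hmem z₀ t hmem0
    have h2 : t * s ≤ u₀ - (inner ℝ v z₀ : ℝ) - 1 := by
      have := mul_le_mul_of_nonpos_right (le_max_right t₀ ((u₀ - (inner ℝ v z₀ : ℝ) - 1) / s))
        (le_of_lt hs)
      rwa [div_mul_cancel₀ _ (ne_of_lt hs)] at this
    linarith
  refine ⟨v, s, u₀, hs, ?_, hmem⟩
  have := hfx
  rwa [hf] at this

lemma exists_affine_minorant {n : ℕ} (g : E n → EReal) (hnb : ∀ x, g x ≠ ⊥)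
    (hlsc : LowerSemicontinuous g) (hconv : ConvexE g)
    (z₀ : E n) (t₀ : ℝ) (hz₀ : g z₀ = (t₀ : EReal)) :
    ∃ w : E n, ∃ b : ℝ, ∀ z, (((inner ℝ w z : ℝ) + b : ℝ) : EReal) ≤ g z := by
  have hr : ¬ g z₀ ≤ ((t₀ - 1 : ℝ) : EReal) := by
    rw [hz₀]; intro hcon
    have : t₀ ≤ t₀ - 1 := by exact_mod_cast hcon
    linarith
  obtain ⟨v, s, u₀, hs0, hlt, hsep⟩ := sep_lemma g hnb hlsc hconv z₀ t₀ hz₀.le z₀ (t₀ - 1) hr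
  have hspos : 0 < s := by
    have h1 := hsep z₀ t₀ hz₀.le
    rcases eq_or_lt_of_le hs0 with h | h
    · rw [← h] at h1 hlt; simp at h1 hlt; linarith
    · exact h
  refine ⟨(-s⁻¹) • v, u₀ / s, ?_⟩
  intro z
  rcases ereal_cases (g z) (hnb z) with h | ⟨a, ha⟩
  · rw [h]; exact le_top
  rw [ha, EReal.coe_le_coe_iff]
  have h1 := hsep z a ha.le
  rw [real_inner_smul_left, div_eq_mul_inv]
  have h3 : (u₀ - (inner ℝ v z : ℝ)) * s⁻¹ ≤ (a * s) * s⁻¹ :=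
    mul_le_mul_of_nonneg_right (by linarith) (inv_nonneg.2 hspos.le)
  have h4 : (a * s) * s⁻¹ = a := by field_simp
  linarith

lemma fm_point {n : ℕ} (g : E n → EReal) (hnb : ∀ x, g x ≠ ⊥)
    (hlsc : LowerSemicontinuous g) (hconv : ConvexE g)
    (z₀ : E n) (t₀ : ℝ) (hz₀ : g z₀ = (t₀ : EReal))
    (x₀ : E n) (r : ℝ) (hr : (r : EReal) < g x₀) :
    ∃ u : E n, ∃ β : ℝ, (∀ z, (((inner ℝ u z : ℝ) + β : ℝ) : EReal) ≤ g z) ∧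
      r < (inner ℝ u x₀ : ℝ) + β := by
  obtain ⟨v, s, u₀, hs0, hlt, hsep⟩ := sep_lemma g hnb hlsc hconv z₀ t₀ hz₀.le x₀ r
    (not_le.2 hr)
  rcases eq_or_lt_of_le hs0 with hs | hs
  · -- s = 0 : vertical separation
    obtain ⟨w, b, hwb⟩ := exists_affine_minorant g hnb hlsc hconv z₀ t₀ hz₀
    rw [← hs] at hlt hsep
    simp only [mul_zero, add_zero] at hlt hsep
    have hδ : 0 < u₀ - (inner ℝ v x₀ : ℝ) := by linarith
    set lam : ℝ := max 0 ((r - (inner ℝ w x₀ : ℝ) - b + 1) / (u₀ - (inner ℝ v x₀ : ℝ))) with hlam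
    have hlam0 : 0 ≤ lam := le_max_left _ _
    refine ⟨w - lam • v, b + lam * u₀, ?_, ?_⟩
    · intro z
      rcases ereal_cases (g z) (hnb z) with h | ⟨a, ha⟩
      · rw [h]; exact le_top
      have h1 := hsep z a ha.le
      have h2 : ((inner ℝ w z : ℝ) + b : ℝ) ≤ a := by
        have := hwb z; rw [ha] at this; exact_mod_cast this
      rw [ha, EReal.coe_le_coe_iff, inner_sub_left, real_inner_smul_left]
      nlinarith
    · have h3 : (r - (inner ℝ w x₀ : ℝ) - b + 1) ≤ lam * (u₀ - (inner ℝ v x₀ : ℝ)) := by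
        have h4 : (r - (inner ℝ w x₀ : ℝ) - b + 1) / (u₀ - (inner ℝ v x₀ : ℝ)) ≤ lam :=
          le_max_right _ _
        exact (div_le_iff₀ hδ).1 h4
      rw [inner_sub_left, real_inner_smul_left]
      nlinarith
  · -- s > 0
    refine ⟨(-s⁻¹) • v, u₀ / s, ?_, ?_⟩
    · intro z
      rcases ereal_cases (g z) (hnb z) with h | ⟨a, ha⟩
      · rw [h]; exact le_top
      rw [ha, EReal.coe_le_coe_iff]
      have h1 := hsep z a ha.le
      rw [real_inner_smul_left, div_eq_mul_inv]
      have h3 : (u₀ - (inner ℝ v z : ℝ)) * s⁻¹ ≤ (a * s) * s⁻¹ :=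
        mul_le_mul_of_nonneg_right (by linarith) (inv_nonneg.2 hs.le)
      have h4 : (a * s) * s⁻¹ = a := by field_simp
      linarith
    · rw [real_inner_smul_left, div_eq_mul_inv]
      have h3 : ((inner ℝ v x₀ : ℝ) + r * s) * s⁻¹ < u₀ * s⁻¹ :=
        mul_lt_mul_of_pos_right hlt (inv_pos.2 hs)
      have h4 : r * s * s⁻¹ = r := by field_simp
      linarith

lemma norm_combo {n : ℕ} (x y : E n) (t : ℝ) :
    ‖t • x + (1 - t) • y‖ ^ 2
      = t * ‖x‖ ^ 2 + (1 - t) * ‖y‖ ^ 2 - t * (1 - t) * ‖x - y‖ ^ 2 := by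
  have e1 : ∀ z : E n, ‖z‖ ^ 2 = (inner ℝ z z : ℝ) := fun z =>
    (real_inner_self_eq_norm_sq z).symm
  rw [e1, e1, e1, e1]
  simp only [inner_add_left, inner_add_right, inner_sub_left, inner_sub_right,
    real_inner_smul_left, real_inner_smul_right, real_inner_comm x y]
  ring

lemma fconj_le_of_minorant {n : ℕ} (g : E n → EReal) (hnb : ∀ x, g x ≠ ⊥)
    (u : E n) (β : ℝ) (hm : ∀ z, (((inner ℝ u z : ℝ) + β : ℝ) : EReal) ≤ g z) :
    fconj g u ≤ ((-β : ℝ) : EReal) := by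
  refine iSup_le fun z => ?_
  rcases ereal_cases (g z) (hnb z) with h | ⟨a, ha⟩
  · rw [h, EReal.sub_top]; exact bot_le
  · have h2 : (inner ℝ u z : ℝ) + β ≤ a := by
      have := hm z; rw [ha] at this; exact_mod_cast this
    rw [ha, ← EReal.coe_sub, EReal.coe_le_coe_iff]; linarith

lemma young {n : ℕ} (g : E n → EReal) (u z : E n) :
    ((inner ℝ u z : ℝ) : EReal) - g z ≤ fconj g u :=
  le_iSup (fun x : E n => (((inner ℝ u x : ℝ)) : EReal) - g x) z

lemma convexE_of_gammaConvexE {n : ℕ} (g : E n → EReal) (hnb : ∀ x, g x ≠ ⊥)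
    (γ : ℝ) (hγ : 0 ≤ γ) (hg : GammaConvexE g γ) : ConvexE g := by
  intro x y t ht0 ht1
  rcases eq_or_lt_of_le ht0 with h0 | h0
  · rw [← h0]; simp
  rcases eq_or_lt_of_le ht1 with h1 | h1
  · rw [h1]; simp
  have hmulnb : ∀ (s : ℝ) (a : EReal), 0 < s → a ≠ ⊥ → (s : EReal) * a ≠ ⊥ := by
    intro s a hs hab
    rcases ereal_cases a hab with h | ⟨r, h⟩
    · rw [h, EReal.mul_top_of_pos (by exact_mod_cast hs)]; simp
    · rw [h, ← EReal.coe_mul]; exact EReal.coe_ne_bot _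
  rcases ereal_cases (g x) (hnb x) with hgx | ⟨a, hgx⟩
  · rw [hgx, EReal.mul_top_of_pos (by exact_mod_cast h0 : (0:EReal) < (t:ℝ)),
      EReal.top_add_of_ne_bot (hmulnb _ _ (by linarith) (hnb y))]
    exact le_top
  rcases ereal_cases (g y) (hnb y) with hgy | ⟨b, hgy⟩
  · rw [hgy, EReal.mul_top_of_pos (by exact_mod_cast (by linarith : (0:ℝ) < 1 - t)),
      EReal.add_top_of_ne_bot (hmulnb _ _ h0 (hnb x))]
    exact le_top
  have hφ := hg x y t ht0 ht1
  simp only [hgx, hgy, ← EReal.coe_sub, ← EReal.coe_mul, ← EReal.coe_add] at hφ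
  set w : E n := t • x + (1 - t) • y with hw
  rcases ereal_cases (g w) (hnb w) with hgw | ⟨d, hgw⟩
  · rw [hgw, EReal.top_sub_coe, top_le_iff] at hφ; exact absurd hφ (EReal.coe_ne_top _)
  rw [hgw, ← EReal.coe_sub, EReal.coe_le_coe_iff] at hφ
  rw [hgx, hgy, hgw, ← EReal.coe_mul, ← EReal.coe_mul, ← EReal.coe_add,
    EReal.coe_le_coe_iff]
  have hq := norm_combo x y t
  nlinarith [mul_nonneg (mul_nonneg h0.le (by linarith : (0:ℝ) ≤ 1 - t))
    (sq_nonneg ‖x - y‖), mul_nonneg hγ (mul_nonneg (mul_nonneg h0.le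
    (by linarith : (0:ℝ) ≤ 1 - t)) (sq_nonneg ‖x - y‖))]

lemma subdiff_flip {n : ℕ} (g : E n → EReal) (hnb : ∀ x, g x ≠ ⊥)
    (hlsc : LowerSemicontinuous g) (hconv : ConvexE g)
    (z₀ : E n) (t₀ : ℝ) (hz₀ : g z₀ = (t₀ : EReal))
    (x' y' : E n) (hx' : x' ∈ subdiffE (fconj g) y') :
    y' ∈ subdiffE g x' := by
  obtain ⟨w, b, hwb⟩ := exists_affine_minorant g hnb hlsc hconv z₀ t₀ hz₀
  have hcw : fconj g w ≤ ((-b : ℝ) : EReal) := fconj_le_of_minorant g hnb w b hwb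
  have hybot : fconj g y' ≠ ⊥ := by
    intro hcon
    have := young g y' z₀
    rw [hz₀, ← EReal.coe_sub, hcon, le_bot_iff] at this
    exact EReal.coe_ne_bot _ this
  have hytop : fconj g y' ≠ ⊤ := by
    intro hcon
    have h1 := hx' w
    rw [hcon, EReal.add_top_of_ne_bot (by simp : ((inner ℝ x' (w - y') : ℝ) : EReal) ≠ ⊥)] at h1
    have h2 := le_trans h1 hcw
    rw [top_le_iff] at h2
    exact EReal.coe_ne_top _ h2
  obtain ⟨c, hc⟩ := (ereal_cases (fconj g y') hybot).resolve_left hytop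
  intro z
  rcases ereal_cases (g z) (hnb z) with hgz | ⟨a, hgz⟩
  · rw [hgz]; exact le_top
  set L : ℝ := a - (inner ℝ y' (z - x') : ℝ) with hL
  have hkey : ¬ ((L : EReal) < g x') := by
    intro hlt
    obtain ⟨u, β, hm, hval⟩ := fm_point g hnb hlsc hconv z₀ t₀ hz₀ x' L hlt
    have hcu : fconj g u ≤ ((-β : ℝ) : EReal) := fconj_le_of_minorant g hnb u β hm
    have h1 := le_trans (hx' u) hcu
    rw [hc, ← EReal.coe_add, EReal.coe_le_coe_iff] at h1
    have h2 : (inner ℝ y' z : ℝ) - a ≤ c := by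
      have := young g y' z
      rw [hgz, ← EReal.coe_sub, hc, EReal.coe_le_coe_iff] at this
      exact this
    rw [inner_sub_right] at h1
    have h3 : (inner ℝ u x' : ℝ) = (inner ℝ x' u : ℝ) := real_inner_comm _ _
    have h4 : (inner ℝ x' y' : ℝ) = (inner ℝ y' x' : ℝ) := real_inner_comm _ _
    rw [hL, inner_sub_right] at hval
    linarith
  have hle : g x' ≤ (L : EReal) := not_lt.1 hkey
  rcases ereal_cases (g x') (hnb x') with hgx | ⟨d, hgx⟩
  · rw [hgx, top_le_iff] at hle; exact absurd hle (EReal.coe_ne_top _)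
  have hdL : d ≤ L := by rw [hgx] at hle; exact_mod_cast hle
  rw [hgx, hgz, ← EReal.coe_add, EReal.coe_le_coe_iff]
  rw [hL] at hdL; linarith

lemma subdiffR_strong {n : ℕ} (h : E n → ℝ) (γ : ℝ)
    (hh : ConvexOn ℝ Set.univ (fun z => h z - γ / 2 * ‖z‖ ^ 2))
    (x w : E n) (hw : w ∈ subdiffR h x) (z : E n) :
    (inner ℝ w (z - x) : ℝ) + γ / 2 * ‖z - x‖ ^ 2 ≤ h z - h x := by
  have key : ∀ t : ℝ, 0 < t → t ≤ 1 →
      (inner ℝ w (z - x) : ℝ) + γ / 2 * (1 - t) * ‖z - x‖ ^ 2 ≤ h z - h x := by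
    intro t ht0 ht1
    have hsub := hw (t • z + (1 - t) • x)
    have he : t • z + (1 - t) • x - x = t • (z - x) := by
      rw [smul_sub, sub_smul, one_smul]; abel
    rw [he, real_inner_smul_right] at hsub
    have hcv := hh.2 (Set.mem_univ z) (Set.mem_univ x) ht0.le
      (by linarith : (0:ℝ) ≤ 1 - t) (by ring)
    simp only [smul_eq_mul] at hcv
    have hn : γ / 2 * ‖t • z + (1 - t) • x‖ ^ 2
        = γ / 2 * (t * ‖z‖ ^ 2 + (1 - t) * ‖x‖ ^ 2 - t * (1 - t) * ‖z - x‖ ^ 2) := by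
      rw [norm_combo]
    have h5 : t * ((inner ℝ w (z - x) : ℝ) + γ / 2 * (1 - t) * ‖z - x‖ ^ 2)
        ≤ t * (h z - h x) := by nlinarith [hsub, hcv, hn]
    exact (mul_le_mul_iff_of_pos_left ht0).1 h5
  refine le_of_forall_pos_le_add fun ε hε => ?_
  set K : ℝ := γ / 2 * ‖z - x‖ ^ 2 with hK
  set t : ℝ := min 1 (ε / (|K| + 1)) with ht
  have habs : 0 ≤ |K| := abs_nonneg _
  have ht0 : 0 < t := lt_min one_pos (div_pos hε (by linarith))
  have ht1 : t ≤ 1 := min_le_left _ _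
  have h6 := key t ht0 ht1
  have h7 : t * (|K| + 1) ≤ ε := by
    have := min_le_right 1 (ε / (|K| + 1))
    exact (le_div_iff₀ (by linarith)).1 this
  have h8 : t * K ≤ ε := by
    have : t * K ≤ t * |K| := mul_le_mul_of_nonneg_left (le_abs_self K) ht0.le
    nlinarith
  nlinarith [h6]

lemma subdiffE_strong {n : ℕ} (g : E n → EReal) (hnb : ∀ x, g x ≠ ⊥) (γ : ℝ)
    (hg : GammaConvexE g γ)
    (x v : E n) (hv : v ∈ subdiffE g x) (d : ℝ) (hd : g x = (d : EReal))
    (z : E n) (a : ℝ) (ha : g z = (a : EReal)) :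
    (inner ℝ v (z - x) : ℝ) + γ / 2 * ‖z - x‖ ^ 2 + d ≤ a := by
  have key : ∀ t : ℝ, 0 < t → t ≤ 1 →
      (inner ℝ v (z - x) : ℝ) + γ / 2 * (1 - t) * ‖z - x‖ ^ 2 + d ≤ a := by
    intro t ht0 ht1
    set wt : E n := t • z + (1 - t) • x with hwt
    have hφ := hg z x t ht0.le ht1
    simp only [ha, hd, ← EReal.coe_sub, ← EReal.coe_mul, ← EReal.coe_add] at hφ
    rcases ereal_cases (g wt) (hnb wt) with hgw | ⟨e, hgw⟩
    · rw [hwt] at hgw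
      rw [hgw, EReal.top_sub_coe, top_le_iff] at hφ
      exact absurd hφ (EReal.coe_ne_top _)
    have hgw' : g (t • z + (1 - t) • x) = (e : EReal) := by rw [← hwt]; exact hgw
    rw [hgw', ← EReal.coe_sub, EReal.coe_le_coe_iff] at hφ
    have hsub := hv wt
    have he : wt - x = t • (z - x) := by
      rw [hwt, smul_sub, sub_smul, one_smul]; abel
    rw [he, real_inner_smul_right, hd, hgw, ← EReal.coe_add, EReal.coe_le_coe_iff] at hsub
    have hn : γ / 2 * ‖t • z + (1 - t) • x‖ ^ 2
        = γ / 2 * (t * ‖z‖ ^ 2 + (1 - t) * ‖x‖ ^ 2 - t * (1 - t) * ‖z - x‖ ^ 2) := by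
      rw [norm_combo]
    have h5 : t * ((inner ℝ v (z - x) : ℝ) + γ / 2 * (1 - t) * ‖z - x‖ ^ 2 + d)
        ≤ t * a := by nlinarith [hsub, hφ, hn]
    exact (mul_le_mul_iff_of_pos_left ht0).1 h5
  refine le_of_forall_pos_le_add fun ε hε => ?_
  set K : ℝ := γ / 2 * ‖z - x‖ ^ 2 with hK
  set t : ℝ := min 1 (ε / (|K| + 1)) with ht
  have habs : 0 ≤ |K| := abs_nonneg _
  have ht0 : 0 < t := lt_min one_pos (div_pos hε (by linarith))
  have ht1 : t ≤ 1 := min_le_left _ _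
  have h6 := key t ht0 ht1
  have h7 : t * (|K| + 1) ≤ ε := by
    have := min_le_right 1 (ε / (|K| + 1))
    exact (le_div_iff₀ (by linarith)).1 this
  have h8 : t * K ≤ ε := by
    have : t * K ≤ t * |K| := mul_le_mul_of_nonneg_left (le_abs_self K) ht0.le
    nlinarith
  nlinarith [h6]


open Filter Topology

theorem dca_subsequential_limits_stationary {n : ℕ}
    (g : E n → EReal) (h : E n → ℝ) (γ₁ γ₂ : ℝ)
    (hγ₁ : 0 ≤ γ₁) (hγ₂ : 0 ≤ γ₂) (hγ : 0 < γ₁ + γ₂)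
    (hnb : ∀ x, g x ≠ ⊥) (hp : ∃ x, g x ≠ ⊤) (hglsc : LowerSemicontinuous g)
    (hg : GammaConvexE g γ₁) (hhcont : Continuous h)
    (hh : ConvexOn ℝ Set.univ (fun x => h x - γ₂ / 2 * ‖x‖ ^ 2))
    (hbelow : ∃ m : ℝ, ∀ x : E n, (m : EReal) ≤ g x - (h x : EReal))
    (x y : ℕ → E n)
    (hy : ∀ k, y k ∈ subdiffR h (x k))
    (hx : ∀ k, x (k + 1) ∈ subdiffE (fconj g) (y k))
    (hbdd : ∃ C : ℝ, ∀ k, ‖x k‖ ≤ C) :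
    ∀ xstar : E n, ∀ φ : ℕ → ℕ, StrictMono φ →
      Filter.Tendsto (fun k => x (φ k)) Filter.atTop (nhds xstar) →
      (subdiffE g xstar ∩ subdiffR h xstar).Nonempty := by
  intro xstar φ hφ hconvx
  classical
  obtain ⟨z₀, hz₀ne⟩ := hp
  obtain ⟨t₀, hz₀⟩ := (ereal_cases (g z₀) (hnb z₀)).resolve_left hz₀ne
  have hgconv : ConvexE g := convexE_of_gammaConvexE g hnb γ₁ hγ₁ hg
  have hflip : ∀ k, y k ∈ subdiffE g (x (k + 1)) := fun k =>
    subdiff_flip g hnb hglsc hgconv z₀ t₀ hz₀ _ _ (hx k)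
  have hfin : ∀ k, ∃ d : ℝ, g (x (k + 1)) = (d : EReal) := by
    intro k
    refine (ereal_cases _ (hnb _)).resolve_left ?_
    intro hcon
    have h1 := hflip k z₀
    rw [hcon, hz₀, EReal.add_top_of_ne_bot (EReal.coe_ne_bot _), top_le_iff] at h1
    exact EReal.coe_ne_top _ h1
  choose G hG using hfin
  obtain ⟨m, hm⟩ := hbelow
  set F : ℕ → ℝ := fun k => G k - h (x (k + 1)) with hF
  have hFlb : ∀ k, m ≤ F k := by
    intro k
    have h1 := hm (x (k + 1))
    rw [hG k, ← EReal.coe_sub, EReal.coe_le_coe_iff] at h1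
    exact h1
  -- descent
  set D : ℕ → ℝ := fun k => ‖x (k + 1) - x k‖ with hD
  have hdec : ∀ k, F (k + 1) + (γ₁ + γ₂) / 2 * (D (k + 1)) ^ 2 ≤ F k := by
    intro k
    have hA := subdiffR_strong h γ₂ hh (x (k + 1)) (y (k + 1)) (hy (k + 1)) (x (k + 2))
    have hB := subdiffE_strong g hnb γ₁ hg (x (k + 2)) (y (k + 1)) (hflip (k + 1))
      (G (k + 1)) (hG (k + 1)) (x (k + 1)) (G k) (hG k)
    have hnsq : ‖x (k + 1) - x (k + 2)‖ ^ 2 = ‖x (k + 2) - x (k + 1)‖ ^ 2 := by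
      rw [norm_sub_rev]
    have hinner : (inner ℝ (y (k + 1)) (x (k + 1) - x (k + 2)) : ℝ)
        = - (inner ℝ (y (k + 1)) (x (k + 2) - x (k + 1)) : ℝ) := by
      rw [← inner_neg_right]
      congr 1
      abel
    rw [hnsq, hinner] at hB
    have hDval : D (k + 1) = ‖x (k + 2) - x (k + 1)‖ := rfl
    simp only [hF, hDval]
    nlinarith [hA, hB]
  have hFanti : Antitone F := antitone_nat_of_succ_le fun k => by
    have h1 := hdec k
    have h9 : 0 ≤ (γ₁ + γ₂) / 2 * (D (k + 1)) ^ 2 :=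
      mul_nonneg (by linarith) (sq_nonneg _)
    calc F (k + 1) ≤ F (k + 1) + (γ₁ + γ₂) / 2 * (D (k + 1)) ^ 2 :=
          le_add_of_nonneg_right h9
      _ ≤ F k := h1
  have hbddb : BddBelow (Set.range F) := by
    refine ⟨m, ?_⟩
    rintro _ ⟨k, rfl⟩
    exact hFlb k
  have hFtends : Tendsto F atTop (𝓝 (⨅ i, F i)) := tendsto_atTop_ciInf hFanti hbddb
  have hFdiff : Tendsto (fun k => F k - F (k + 1)) atTop (𝓝 0) := by
    have h2 : Tendsto (fun k => F (k + 1)) atTop (𝓝 (⨅ i, F i)) :=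
      hFtends.comp (tendsto_add_atTop_nat 1)
    simpa using hFtends.sub h2
  have hsq0 : Tendsto (fun k => (D (k + 1)) ^ 2) atTop (𝓝 0) := by
    have hpos : (0:ℝ) < 2 / (γ₁ + γ₂) := by positivity
    refine squeeze_zero (fun k => sq_nonneg _)
      (fun k => ?_) ?_ (g := fun k => 2 / (γ₁ + γ₂) * (F k - F (k + 1)))
    · have h1 := hdec k
      have h2 : (γ₁ + γ₂) / 2 * (D (k + 1)) ^ 2 ≤ F k - F (k + 1) := by linarith
      have h3 := mul_le_mul_of_nonneg_left h2 hpos.le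
      have h4 : 2 / (γ₁ + γ₂) * ((γ₁ + γ₂) / 2 * (D (k + 1)) ^ 2) = (D (k + 1)) ^ 2 := by
        field_simp
      linarith
    · have := hFdiff.const_mul (2 / (γ₁ + γ₂))
      simpa using this
  have hD1 : Tendsto (fun k => D (k + 1)) atTop (𝓝 0) := by
    have h1 := hsq0.sqrt
    have h2 : ∀ k, Real.sqrt ((D (k + 1)) ^ 2) = D (k + 1) := fun k =>
      Real.sqrt_sq (norm_nonneg _)
    simpa [h2] using h1
  have hDall : Tendsto D atTop (𝓝 0) := (tendsto_add_atTop_iff_nat 1).1 hD1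
  have hφtop : Tendsto φ atTop atTop := hφ.tendsto_atTop
  have hx1 : Tendsto (fun k => x (φ k + 1)) atTop (𝓝 xstar) := by
    have hdiff0 : Tendsto (fun k => x (φ k + 1) - x (φ k)) atTop (𝓝 0) := by
      rw [tendsto_zero_iff_norm_tendsto_zero]
      exact hDall.comp hφtop
    have := hconvx.add hdiff0
    simpa using this
  -- boundedness of y
  obtain ⟨C, hC⟩ := hbdd
  have hC0 : (0:ℝ) ≤ C := le_trans (norm_nonneg _) (hC 0)
  obtain ⟨p1, hp1mem, hp1⟩ := (isCompact_closedBall (0 : E n) (C + 1)).exists_isMaxOn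
    ⟨0, Metric.mem_closedBall_self (by linarith)⟩ hhcont.continuousOn
  obtain ⟨p0, hp0mem, hp0⟩ := (isCompact_closedBall (0 : E n) C).exists_isMinOn
    ⟨0, Metric.mem_closedBall_self hC0⟩ hhcont.continuousOn
  set M : ℝ := h p1 - h p0 with hM
  have hxmem : ∀ k, x k ∈ Metric.closedBall (0 : E n) C := fun k => by
    rw [Metric.mem_closedBall, dist_zero_right]; exact hC k
  have hxmem1 : ∀ k, x k ∈ Metric.closedBall (0 : E n) (C + 1) := fun k => by
    rw [Metric.mem_closedBall, dist_zero_right]; linarith [hC k]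
  have hyb : ∀ k, y k ∈ Metric.closedBall (0 : E n) M := by
    intro k
    rw [Metric.mem_closedBall, dist_zero_right]
    rcases eq_or_ne (y k) 0 with h0 | h0
    · rw [h0, norm_zero, hM]
      have h1 := hp1 (hxmem1 k)
      have h2 := hp0 (hxmem k)
      simp only [Set.mem_setOf_eq] at h1 h2
      linarith
    · set u : E n := ‖y k‖⁻¹ • y k with hu
      have hun : ‖u‖ = 1 := by
        rw [hu, norm_smul, norm_inv, norm_norm, inv_mul_cancel₀ (norm_ne_zero_iff.2 h0)]
      have hsub := hy k (x k + u)
      have he : x k + u - x k = u := by abel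
      rw [he] at hsub
      have hiu : (inner ℝ (y k) u : ℝ) = ‖y k‖ := by
        rw [hu, real_inner_smul_right, real_inner_self_eq_norm_sq, sq]
        field_simp
      have hmem1 : x k + u ∈ Metric.closedBall (0 : E n) (C + 1) := by
        rw [Metric.mem_closedBall, dist_zero_right]
        calc ‖x k + u‖ ≤ ‖x k‖ + ‖u‖ := norm_add_le _ _
          _ ≤ C + 1 := by rw [hun]; linarith [hC k]
      have h1 := hp1 hmem1
      have h2 := hp0 (hxmem k)
      simp only [Set.mem_setOf_eq] at h1 h2
      rw [hiu] at hsub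
      rw [hM]
      linarith
  obtain ⟨ystar, _, ψ, hψ, hyconv⟩ :=
    (isCompact_closedBall (0 : E n) M).tendsto_subseq (fun k => hyb (φ k))
  have hψtop : Tendsto ψ atTop atTop := hψ.tendsto_atTop
  have hxx : Tendsto (fun k => x (φ (ψ k) + 1)) atTop (𝓝 xstar) := hx1.comp hψtop
  have hxφψ : Tendsto (fun k => x (φ (ψ k))) atTop (𝓝 xstar) := hconvx.comp hψtop
  have hyy : Tendsto (fun k => y (φ (ψ k))) atTop (𝓝 ystar) := hyconv
  refine ⟨ystar, ?_, ?_⟩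
  · -- ystar ∈ subdiffE g xstar
    intro z
    rcases ereal_cases (g z) (hnb z) with hgz | ⟨a, hgz⟩
    · rw [hgz]; exact le_top
    have hbound : ∀ j, G j ≤ a - (inner ℝ (y j) (z - x (j + 1)) : ℝ) := by
      intro j
      have h1 := hflip j z
      rw [hgz, hG j, ← EReal.coe_add, EReal.coe_le_coe_iff] at h1
      linarith
    have hinner_t : Tendsto
        (fun k => a - (inner ℝ (y (φ (ψ k))) (z - x (φ (ψ k) + 1)) : ℝ)) atTop
        (𝓝 (a - (inner ℝ ystar (z - xstar) : ℝ))) :=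
      tendsto_const_nhds.sub (hyy.inner (tendsto_const_nhds.sub hxx))
    set L : ℝ := a - (inner ℝ ystar (z - xstar) : ℝ) with hL
    have hle : g xstar ≤ (L : EReal) := by
      by_contra hcon
      push_neg at hcon
      obtain ⟨c, hc1, hc2⟩ := EReal.exists_between_coe_real hcon
      have hc1' : L < c := by exact_mod_cast hc1
      have hev1 : ∀ᶠ k in atTop, (c : EReal) < g (x (φ (ψ k) + 1)) :=
        hxx.eventually (hglsc xstar c hc2)
      have hev2 : ∀ᶠ k in atTop,
          a - (inner ℝ (y (φ (ψ k))) (z - x (φ (ψ k) + 1)) : ℝ) < c :=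
        hinner_t.eventually_lt_const hc1'
      obtain ⟨k, hk1, hk2⟩ := (hev1.and hev2).exists
      rw [hG (φ (ψ k)), EReal.coe_lt_coe_iff] at hk1
      have := hbound (φ (ψ k))
      linarith
    rcases ereal_cases (g xstar) (hnb xstar) with hgx | ⟨d, hgx⟩
    · rw [hgx, top_le_iff] at hle; exact absurd hle (EReal.coe_ne_top _)
    have hdL : d ≤ L := by rw [hgx] at hle; exact_mod_cast hle
    rw [hgx, hgz, ← EReal.coe_add, EReal.coe_le_coe_iff, hL] at *
    linarith
  · -- ystar ∈ subdiffR h xstar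
    intro z
    have hper : ∀ k, (inner ℝ (y (φ (ψ k))) (z - x (φ (ψ k))) : ℝ)
        ≤ h z - h (x (φ (ψ k))) := fun k => hy _ z
    have hl : Tendsto (fun k => (inner ℝ (y (φ (ψ k))) (z - x (φ (ψ k))) : ℝ)) atTop
        (𝓝 (inner ℝ ystar (z - xstar) : ℝ)) :=
      hyy.inner (tendsto_const_nhds.sub hxφψ)
    have hr : Tendsto (fun k => h z - h (x (φ (ψ k)))) atTop (𝓝 (h z - h xstar)) :=
      tendsto_const_nhds.sub ((hhcont.tendsto xstar).comp hxφψ)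
    exact le_of_tendsto_of_tendsto' hl hr hper
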